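/- Let k ≥ 1 and e ≥ 2. For a permutation σ of Fin k, let σ̂ be the permutation of Fin k × Fin e defined by σ̂(i, j) = (i, j+1) if j < e−1 and σ̂(i, e−1) = (σ(i), 0). Then the cycle type of σ̂ is the multiset obtained by multiplying every entry of the multiset cycleType(σ) + {1,1,…,1} (with k − |support(σ)| copies of 1, one for each fixed point of σ) by e. Consequently, if σ and τ are conjugate permutations of Fin k, then σ̂ and τ̂ are conjugate permutations of Fin k × Fin e. (The conjugacy-class map μ ↦ eμ underlying the Farahat map F with (Fχ)(μ) = χ(eμ), Definition 6.4.) -/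

import Mathlib

open Equiv Equiv.Perm Finset

private lemma farahat_count_aux {α : Type*} [Fintype α] [DecidableEq α]
    (π : Equiv.Perm α) (n : ℕ) (hn : 1 ≤ n) :
    n * π.cycleType.count n =
      (Finset.univ.filter (fun x => ((π.cycleOf x).support.card = n))).card := by
  classical
  set S := (Finset.univ.filter (fun x : α => ((π.cycleOf x).support.card = n))) with hS
  set T := (π.cycleFactorsFinset.filter (fun c => c.support.card = n)) with hT
  have hsupp : ∀ x ∈ S, x ∈ π.support := by
    intro x hx
    simp only [hS, mem_filter, mem_univ, true_and] at hx
    by_contra h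
    rw [Equiv.Perm.notMem_support] at h
    rw [(Equiv.Perm.cycleOf_eq_one_iff _).mpr h] at hx
    simp at hx
    omega
  have hmem : ∀ x ∈ S, π.cycleOf x ∈ T := by
    intro x hx
    have hx' := hsupp x hx
    simp only [hS, mem_filter, mem_univ, true_and] at hx
    exact mem_filter.mpr ⟨Equiv.Perm.cycleOf_mem_cycleFactorsFinset_iff.mpr hx', hx⟩
  have hcard := Finset.card_eq_sum_card_fiberwise hmem
  have hfiber : ∀ c ∈ T, (S.filter (fun x => π.cycleOf x = c)) = c.support := by
    intro c hc
    rw [mem_filter] at hc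
    ext x
    simp only [mem_filter, mem_univ, true_and, hS]
    constructor
    · rintro ⟨h1, h2⟩
      rw [← h2, Equiv.Perm.mem_support_cycleOf_iff]
      refine ⟨Equiv.Perm.SameCycle.refl _ _, ?_⟩
      exact hsupp x (by simp only [hS, mem_filter, mem_univ, true_and]; exact h1)
    · intro hx
      have h3 := (Equiv.Perm.cycle_is_cycleOf hx hc.1).symm
      exact ⟨by rw [h3]; exact hc.2, h3⟩
  have hsum : S.card = T.card * n := by
    rw [hcard]
    rw [Finset.sum_congr rfl (fun c hc => by rw [hfiber c hc, (mem_filter.mp hc).2])]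
    simp [mul_comm]
  have hcount : π.cycleType.count n = T.card := by
    rw [Equiv.Perm.cycleType_def, Multiset.count_map]
    rw [hT, Finset.card_def, Finset.filter_val]
    congr 1
    apply Multiset.filter_congr
    intro c _
    simp [eq_comm]
  rw [hcount, hsum, mul_comm]

private lemma farahat_hat (k e : ℕ) (hk : 1 ≤ k) (he : 2 ≤ e)
    (σ : Equiv.Perm (Fin k)) (σh : Equiv.Perm (Fin k × Fin e))
    (hσh : ∀ (i : Fin k) (j : Fin e), σh (i, j) =
      if h : (j : ℕ) + 1 < e then (i, ⟨(j : ℕ) + 1, h⟩) else (σ i, ⟨0, Nat.lt_of_lt_of_le Nat.two_pos he⟩)) :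
    σh.cycleType =
      (σ.cycleType + Multiset.replicate (k - σ.support.card) 1).map (fun m => e * m) := by
  classical
  have e0 : 0 < e := by omega
  set z0 : Fin e := ⟨0, e0⟩ with hz0
  -- powers below e
  have hlt : ∀ (i : Fin k) (m : ℕ) (h : m < e), (σh ^ m) (i, z0) = (i, ⟨m, h⟩) := by
    intro i m
    induction m with
    | zero => intro h; simp [z0]
    | succ m ih =>
      intro h
      have hm : m < e := by omega
      rw [pow_succ', Equiv.Perm.mul_apply, ih hm, hσh]
      split_ifs with h'
      · simp
      · simp at h'; omega
  -- power e
  have hpe : ∀ i : Fin k, (σh ^ e) (i, z0) = (σ i, z0) := by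
    intro i
    have h1 : e - 1 < e := by omega
    have h2 : (σh ^ e) (i, z0) = σh ((σh ^ (e - 1)) (i, z0)) := by
      have hp : σh ^ e = σh * σh ^ (e - 1) := by rw [← pow_succ']; congr 1; omega
      rw [hp, Equiv.Perm.mul_apply]
    rw [h2, hlt i (e - 1) h1, hσh]
    split_ifs with h'
    · simp at h'; omega
    · rfl
  -- powers e * n
  have hmul : ∀ (n : ℕ) (i : Fin k), (σh ^ (e * n)) (i, z0) = ((σ ^ n) i, z0) := by
    intro n
    induction n with
    | zero => intro i; simp
    | succ n ih =>
      intro i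
      have hq : σh ^ (e * (n + 1)) = σh ^ (e * n) * σh ^ e := by
        rw [show e * (n + 1) = e * n + e by ring, pow_add]
      rw [hq, Equiv.Perm.mul_apply, hpe, ih, ← Equiv.Perm.mul_apply, ← pow_succ]
  -- the first component of any power is a power of σ
  have hfst : ∀ (n : ℕ) (x : Fin k × Fin e), ∃ m : ℕ, ((σh ^ n) x).1 = (σ ^ m) x.1 := by
    intro n
    induction n with
    | zero => intro x; exact ⟨0, by simp⟩
    | succ n ih =>
      intro x
      obtain ⟨m, hm⟩ := ih x
      have h2 : (σh ^ (n + 1)) x = σh (((σh ^ n) x).1, ((σh ^ n) x).2) := by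
        rw [pow_succ', Equiv.Perm.mul_apply]
      rw [h2, hσh]
      split_ifs with h
      · exact ⟨m, hm⟩
      · exact ⟨m + 1, by rw [pow_succ', Equiv.Perm.mul_apply, ← hm]⟩
  -- same cycle characterisation
  have hsc0 : ∀ (i : Fin k) (j : Fin e), σh.SameCycle (i, z0) (i, j) := by
    intro i j
    exact ⟨(j : ℕ), by rw [zpow_natCast, hlt i j j.2]⟩
  have hsc : ∀ (i : Fin k) (j : Fin e) (i' : Fin k) (j' : Fin e),
      σh.SameCycle (i, j) (i', j') ↔ σ.SameCycle i i' := by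
    intro i j i' j'
    constructor
    · intro h
      obtain ⟨n, -, hn⟩ := h.exists_pow_eq'
      obtain ⟨m, hm⟩ := hfst n (i, j)
      rw [hn] at hm
      exact ⟨m, by rw [zpow_natCast]; exact hm.symm⟩
    · intro h
      obtain ⟨n, -, hn⟩ := h.exists_pow_eq'
      have c1 : σh.SameCycle (i, z0) (i', z0) := ⟨(e * n : ℕ), by
        rw [zpow_natCast, hmul n i, hn]⟩
      exact ((hsc0 i j).symm.trans c1).trans (hsc0 i' j')
  -- full support
  have hmove : ∀ x : Fin k × Fin e, σh x ≠ x := by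
    rintro ⟨i, j⟩ hx
    rw [hσh] at hx
    split_ifs at hx with h
    · have h2 := congrArg (fun p : Fin k × Fin e => (p.2 : ℕ)) hx
      simp at h2
    · have h2 := congrArg (fun p : Fin k × Fin e => (p.2 : ℕ)) hx
      simp only [hz0] at h2
      have hj := j.2
      omega
  -- support of cycleOf
  have horb : ∀ (i : Fin k) (j : Fin e), (σh.cycleOf (i, j)).support =
      (Finset.univ.filter (fun i' => σ.SameCycle i i')) ×ˢ Finset.univ := by
    intro i j
    ext ⟨i', j'⟩
    simp only [Equiv.Perm.mem_support_cycleOf_iff, Finset.mem_product, Finset.mem_filter,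
      Finset.mem_univ, true_and, and_true, hsc]
    exact and_iff_left (Equiv.Perm.mem_support.mpr (hmove _))
  have hcardorb : ∀ x : Fin k × Fin e, (σh.cycleOf x).support.card =
      e * (Finset.univ.filter (fun i' => σ.SameCycle x.1 i')).card := by
    rintro ⟨i, j⟩
    rw [horb, Finset.card_product]
    simp [mul_comm]
  -- orbit sizes in Fin k
  set cO : Fin k → ℕ := fun i => (Finset.univ.filter (fun i' => σ.SameCycle i i')).card with hcO
  have hOfix : ∀ i : Fin k, i ∉ σ.support → cO i = 1 := by
    intro i hi
    have hfix : σ i = i := Equiv.Perm.notMem_support.mp hi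
    have : (Finset.univ.filter (fun i' => σ.SameCycle i i')) = {i} := by
      ext y
      simp only [Finset.mem_filter, Finset.mem_univ, true_and, Finset.mem_singleton]
      constructor
      · rintro ⟨z, hz⟩
        rw [← hz, Equiv.Perm.zpow_apply_eq_self_of_apply_eq_self hfix]
      · rintro rfl; exact Equiv.Perm.SameCycle.refl _ _
    rw [hcO]
    simp only [this, Finset.card_singleton]
  have hOsupp : ∀ i : Fin k, i ∈ σ.support → cO i = (σ.cycleOf i).support.card := by
    intro i hi
    have : (Finset.univ.filter (fun i' => σ.SameCycle i i')) = (σ.cycleOf i).support := by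
      ext y
      simp only [Finset.mem_filter, Finset.mem_univ, true_and,
        Equiv.Perm.mem_support_cycleOf_iff]
      exact (and_iff_left hi).symm
    rw [hcO]; simp only [this]
  have hO2 : ∀ i : Fin k, i ∈ σ.support → 2 ≤ cO i := by
    intro i hi
    rw [hOsupp i hi]
    exact Equiv.Perm.two_le_card_support_cycleOf_iff.mpr (Equiv.Perm.mem_support.mp hi)
  -- count of orbits of a given size in Fin k
  have hkey : ∀ m : ℕ, 1 ≤ m →
      (Finset.univ.filter (fun i => cO i = m)).card =
        m * (σ.cycleType + Multiset.replicate (k - σ.support.card) 1).count m := by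
    intro m hm
    rcases eq_or_lt_of_le hm with h1 | h2
    · -- m = 1
      rw [← h1]
      have hset : (Finset.univ.filter (fun i => cO i = 1)) = σ.supportᶜ := by
        ext i
        simp only [Finset.mem_filter, Finset.mem_univ, true_and, Finset.mem_compl]
        constructor
        · intro h hi
          have := hO2 i hi; omega
        · intro h; exact hOfix i h
      rw [hset, Finset.card_compl, Fintype.card_fin]
      rw [Multiset.count_add, Multiset.count_replicate]
      have : σ.cycleType.count 1 = 0 := by
        apply Multiset.count_eq_zero_of_notMem
        intro h
        have := Equiv.Perm.two_le_of_mem_cycleType h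
        omega
      simp [this]
    · -- m ≥ 2
      have hm2 : 2 ≤ m := h2
      have hset : (Finset.univ.filter (fun i => cO i = m)) =
          (Finset.univ.filter (fun i => (σ.cycleOf i).support.card = m)) := by
        ext i
        simp only [Finset.mem_filter, Finset.mem_univ, true_and]
        constructor
        · intro h
          by_cases hi : i ∈ σ.support
          · rw [← hOsupp i hi]; exact h
          · have := hOfix i hi; omega
        · intro h
          have hi : i ∈ σ.support :=
            Equiv.Perm.mem_support.mpr
              (Equiv.Perm.two_le_card_support_cycleOf_iff.mp (by omega))
          rw [hOsupp i hi]; exact h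
      rw [hset, ← farahat_count_aux σ m (by omega)]
      rw [Multiset.count_add, Multiset.count_replicate, if_neg (by omega)]
      ring
  -- final multiset equality
  ext n
  rcases Nat.eq_zero_or_pos n with rfl | hn
  · rw [Multiset.count_eq_zero_of_notMem, Multiset.count_eq_zero_of_notMem]
    · intro h
      obtain ⟨m, hm, hem⟩ := Multiset.mem_map.mp h
      have hem' : e * m = 0 := hem
      have hm0 : m = 0 := by
        rcases Nat.mul_eq_zero.mp hem' with h' | h'
        · omega
        · exact h'
      subst hm0
      rw [Multiset.mem_add] at hm
      rcases hm with hm | hm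
      · have := Equiv.Perm.two_le_of_mem_cycleType hm; omega
      · have := Multiset.eq_of_mem_replicate hm; omega
    · intro h
      have := Equiv.Perm.two_le_of_mem_cycleType h; omega
  · have hL := farahat_count_aux σh n hn
    have hSeq : (Finset.univ.filter (fun x : Fin k × Fin e => ((σh.cycleOf x).support.card = n)))
        = (Finset.univ.filter (fun i => e * cO i = n)) ×ˢ Finset.univ := by
      ext ⟨i, j⟩
      simp only [Finset.mem_filter, Finset.mem_univ, true_and, Finset.mem_product, and_true]
      rw [hcardorb]
    rw [hSeq, Finset.card_product, Finset.card_univ, Fintype.card_fin] at hL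
    by_cases hdvd : e ∣ n
    · obtain ⟨m, rfl⟩ := hdvd
      have hm1 : 1 ≤ m := by
        rcases Nat.eq_zero_or_pos m with rfl | h; · simp at hn
        · exact h
      have hset : (Finset.univ.filter (fun i => e * cO i = e * m)) =
          (Finset.univ.filter (fun i => cO i = m)) := by
        ext i
        simp only [Finset.mem_filter, Finset.mem_univ, true_and]
        constructor
        · intro h; exact Nat.eq_of_mul_eq_mul_left e0 h
        · intro h; rw [h]
      rw [hset, hkey m hm1] at hL
      have hR : ((σ.cycleType + Multiset.replicate (k - σ.support.card) 1).map
          (fun m => e * m)).count (e * m) =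
          (σ.cycleType + Multiset.replicate (k - σ.support.card) 1).count m :=
        Multiset.count_map_eq_count' _ _ (fun a b hab =>
          Nat.eq_of_mul_eq_mul_left e0 hab) m
      rw [hR]
      have : (e * m) * σh.cycleType.count (e * m) =
          (e * m) * (σ.cycleType + Multiset.replicate (k - σ.support.card) 1).count m := by
        rw [hL]; ring
      exact Nat.eq_of_mul_eq_mul_left hn this
    · have hset : (Finset.univ.filter (fun i => e * cO i = n)) = ∅ := by
        ext i
        simp only [Finset.mem_filter, Finset.mem_univ, true_and, Finset.notMem_empty,
          iff_false]
        intro h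
        exact hdvd ⟨cO i, h.symm⟩
      rw [hset] at hL
      simp only [Finset.card_empty, zero_mul] at hL
      have hL0 : σh.cycleType.count n = 0 := by
        rcases Nat.mul_eq_zero.mp hL with h | h
        · omega
        · exact h
      rw [hL0]
      symm
      apply Multiset.count_eq_zero_of_notMem
      intro h
      obtain ⟨m, hm, hem⟩ := Multiset.mem_map.mp h
      exact hdvd ⟨m, hem.symm⟩

/-- **The conjugacy-class map `μ ↦ eμ` underlying the Farahat map.** For a permutation
`σ` of `Fin k`, let `σ̂` be the permutation of `Fin k × Fin e` with
`σ̂(i, j) = (i, j+1)` if `j < e−1` and `σ̂(i, e−1) = (σ i, 0)`.  Then the cycle type of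
`σ̂` is obtained by multiplying every entry of `cycleType σ + {1, …, 1}` (with
`k − |support σ|` copies of `1`, one for each fixed point of `σ`) by `e`.  Consequently,
if `σ` and `τ` are conjugate, so are `σ̂` and `τ̂`. -/
theorem farahat_cycleType (k e : ℕ) (hk : 1 ≤ k) (he : 2 ≤ e)
    (σ τ : Equiv.Perm (Fin k)) (σh τh : Equiv.Perm (Fin k × Fin e))
    (hσh : ∀ (i : Fin k) (j : Fin e), σh (i, j) =
      if h : (j : ℕ) + 1 < e then (i, ⟨(j : ℕ) + 1, h⟩) else (σ i, ⟨0, by omega⟩))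
    (hτh : ∀ (i : Fin k) (j : Fin e), τh (i, j) =
      if h : (j : ℕ) + 1 < e then (i, ⟨(j : ℕ) + 1, h⟩) else (τ i, ⟨0, by omega⟩)) :
    σh.cycleType =
      (σ.cycleType + Multiset.replicate (k - σ.support.card) 1).map (fun m => e * m) ∧
    (IsConj σ τ → IsConj σh τh) := by
  have h1 := farahat_hat k e hk he σ σh hσh
  have h2 := farahat_hat k e hk he τ τh hτh
  refine ⟨h1, fun hconj => ?_⟩
  have hct : σ.cycleType = τ.cycleType := Equiv.Perm.isConj_iff_cycleType_eq.mp hconj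
  have hcard : σ.support.card = τ.support.card := by
    rw [← Equiv.Perm.sum_cycleType, ← Equiv.Perm.sum_cycleType, hct]
  rw [Equiv.Perm.isConj_iff_cycleType_eq, h1, h2, hct, hcard]
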